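/- Let (Ω, 𝒢, P) be a probability space, let Y be an integrable random variable, let A ∈ 𝒢 with P(A) > 0, and let ℱ ⊆ 𝒢 be a sub-σ-algebra. Then, P-almost surely, ( E(1_A · Y | ℱ) / P(A | ℱ) ) · 1_A = E_A(Y | ℱ) · 1_A, where the convention 0/0 = 0 is used and E_A(· | ℱ) denotes conditional expectation with respect to ℱ under the conditional probability measure P(· | A). -/

import Mathlib

open MeasureTheory ProbabilityTheory Filter
open scoped ENNReal Topology

/-- For an integrable `Y`, an event `A` with `P(A) > 0`, and a sub-σ-algebra `ℱ`, almost surely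
`(E(1_A·Y | ℱ) / P(A | ℱ))·1_A = E_A(Y | ℱ)·1_A`, with the convention `0/0 = 0` (Lean's
division by zero yields `0`), where `E_A(·|ℱ)` is conditional expectation with respect to `ℱ`
under the conditional probability measure `P(·|A)`. -/
theorem stmt10 {Ω : Type*} [𝒢 : MeasurableSpace Ω] (P : Measure Ω) [IsProbabilityMeasure P]
    (Y : Ω → ℝ) (hY : Integrable Y P) (A : Set Ω) (hA : MeasurableSet A) (hApos : 0 < P A)
    (ℱ : MeasurableSpace Ω) (hℱ : ℱ ≤ 𝒢) :
    ∀ᵐ ω ∂P,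
      (P[A.indicator Y | ℱ]) ω / (P[A.indicator (fun _ => (1 : ℝ)) | ℱ]) ω
          * A.indicator (fun _ => (1 : ℝ)) ω
        = ((P[|A])[Y | ℱ]) ω * A.indicator (fun _ => (1 : ℝ)) ω := by
  letI : MeasurableSpace Ω := 𝒢
  have hAne : P A ≠ 0 := hApos.ne'
  haveI : IsProbabilityMeasure (P[|A]) := cond_isProbabilityMeasure hAne
  set μ := P[|A] with hμdef
  set ind : Ω → ℝ := A.indicator (fun _ => (1 : ℝ)) with hinddef
  set Z : Ω → ℝ := μ[Y|ℱ] with hZdef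
  set W : Ω → ℝ := P[ind|ℱ] with hWdef
  set f1 : Ω → ℝ := P[A.indicator Y|ℱ] with hf1def
  -- basic integrability
  have hintAY : Integrable (A.indicator Y) P := hY.indicator hA
  have hint1A : Integrable ind P := (integrable_const (1:ℝ)).indicator hA
  have hinvne : (P A)⁻¹ ≠ ∞ := ENNReal.inv_ne_top.mpr hAne
  have hYμ : Integrable Y μ := by
    rw [hμdef, ProbabilityTheory.cond]
    exact hY.restrict.smul_measure hinvne
  have hZμ : Integrable Z μ := integrable_condExp
  have hPA_smul : (P A) • μ = P.restrict A := by
    rw [hμdef, ProbabilityTheory.cond, smul_smul,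
      ENNReal.mul_inv_cancel hAne (measure_ne_top P A), one_smul]
  have hZPA : Integrable Z (P.restrict A) := by
    rw [← hPA_smul]; exact hZμ.smul_measure (measure_ne_top P A)
  have hZindInt : Integrable (A.indicator Z) P := (integrable_indicator_iff hA).mpr hZPA
  have hZm : StronglyMeasurable[ℱ] Z := stronglyMeasurable_condExp
  have hWm : StronglyMeasurable[ℱ] W := stronglyMeasurable_condExp
  have hWnn : 0 ≤ᵐ[P] W :=
    condExp_nonneg (Eventually.of_forall fun ω =>
      Set.indicator_nonneg (fun _ _ => zero_le_one) ω)
  -- relation between integrals over P and μ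
  have measrel : ∀ (f : Ω → ℝ) (s : Set Ω), MeasurableSet s →
      ∫ ω in s, A.indicator f ω ∂P = (P A).toReal * ∫ ω in s, f ω ∂μ := by
    intro f s hs
    rw [setIntegral_indicator hA, hμdef, ProbabilityTheory.cond, Measure.restrict_smul,
      Measure.restrict_restrict hs, integral_smul_measure, ENNReal.toReal_inv, smul_eq_mul,
      ← mul_assoc, mul_inv_cancel₀ (ENNReal.toReal_ne_zero.mpr ⟨hAne, measure_ne_top P A⟩),
      one_mul]
  -- pull-out property
  have pull : ∀ (g : Ω → ℝ), StronglyMeasurable[ℱ] g →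
      Integrable (fun ω => g ω * ind ω) P → ∀ s : Set Ω, MeasurableSet[ℱ] s →
      ∫ ω in s, g ω * ind ω ∂P = ∫ ω in s, g ω * W ω ∂P := by
    intro g hgm hgint s hs
    have h1 : P[g * ind|ℱ] =ᵐ[P] g * P[ind|ℱ] :=
      condExp_mul_of_stronglyMeasurable_left hgm hgint hint1A
    calc ∫ ω in s, g ω * ind ω ∂P = ∫ ω in s, (P[g * ind|ℱ]) ω ∂P :=
          (setIntegral_condExp hℱ hgint hs).symm
      _ = ∫ ω in s, g ω * W ω ∂P := integral_congr_ae (ae_restrict_of_ae h1)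
  -- truncations
  set Zn : ℕ → Ω → ℝ := fun n ω => if |Z ω| ≤ n then Z ω else 0 with hZndef
  have hZnm : ∀ n, StronglyMeasurable[ℱ] (Zn n) := by
    intro n
    letI : MeasurableSpace Ω := ℱ
    exact (Measurable.ite (hZm.measurable.abs measurableSet_Iic) hZm.measurable
      measurable_const).stronglyMeasurable
  have hZn_le : ∀ n ω, |Zn n ω| ≤ |Z ω| := by
    intro n ω
    rw [hZndef]; dsimp only
    split <;> simp [abs_nonneg]
  have hZn_bdd : ∀ n ω, ‖Zn n ω‖ ≤ (n : ℝ) := by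
    intro n ω
    rw [hZndef]; dsimp only
    split
    · rwa [Real.norm_eq_abs]
    · simp
  have hZn_tendsto : ∀ ω, Tendsto (fun n => Zn n ω) atTop (𝓝 (Z ω)) := by
    intro ω
    refine tendsto_atTop_of_eventually_const (i₀ := ⌈|Z ω|⌉₊) fun n hn => ?_
    rw [hZndef]; dsimp only
    rw [if_pos ((Nat.le_ceil _).trans (Nat.cast_le.mpr hn))]
  have hZnind_int : ∀ n, Integrable (fun ω => Zn n ω * ind ω) P := fun n =>
    hint1A.bdd_mul ((hZnm n).mono hℱ).aestronglyMeasurable (Eventually.of_forall (hZn_bdd n))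
  have habsZnind_int : ∀ n, Integrable (fun ω => |Zn n ω| * ind ω) P := fun n =>
    hint1A.bdd_mul (((hZnm n).mono hℱ).aestronglyMeasurable.norm.congr
      (Eventually.of_forall fun ω => (Real.norm_eq_abs _)))
      (Eventually.of_forall fun ω => by rw [Real.norm_eq_abs, abs_abs]; exact hZn_bdd n ω)
  -- pointwise bound used twice
  have hbound_ind : ∀ n ω, |Zn n ω| * ind ω ≤ |A.indicator Z ω| := by
    intro n ω
    by_cases hω : ω ∈ A
    · simp only [hinddef, Set.indicator_of_mem hω, mul_one]
      exact hZn_le n ω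
    · simp [hinddef, Set.indicator_of_notMem hω]
  -- integrability of Z * W
  have hZW_meas : AEStronglyMeasurable (fun ω => Z ω * W ω) P :=
    ((hZm.mul hWm).mono hℱ).aestronglyMeasurable
  have hZnW_int : ∀ n, Integrable (fun ω => Zn n ω * W ω) P := fun n =>
    integrable_condExp.bdd_mul ((hZnm n).mono hℱ).aestronglyMeasurable (Eventually.of_forall (hZn_bdd n))
  have key_lint : ∀ n, (∫⁻ ω, ‖Zn n ω * W ω‖₊ ∂P)
      ≤ ENNReal.ofReal (∫ ω, |A.indicator Z ω| ∂P) := by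
    intro n
    simp_rw [← enorm_eq_nnnorm]
    rw [← ofReal_integral_norm_eq_lintegral_enorm (hZnW_int n)]
    apply ENNReal.ofReal_le_ofReal
    have e1 : ∫ ω, ‖Zn n ω * W ω‖ ∂P = ∫ ω, |Zn n ω| * W ω ∂P := by
      refine integral_congr_ae ?_
      filter_upwards [hWnn] with ω hω
      rw [Real.norm_eq_abs, abs_mul, abs_of_nonneg hω]
    have e2 : ∫ ω, |Zn n ω| * ind ω ∂P = ∫ ω, |Zn n ω| * W ω ∂P := by
      have habs : StronglyMeasurable[ℱ] fun ω => |Zn n ω| := by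
        letI : MeasurableSpace Ω := ℱ
        exact (hZnm n).measurable.abs.stronglyMeasurable
      have := pull (fun ω => |Zn n ω|) habs (habsZnind_int n)
        Set.univ MeasurableSet.univ
      simpa [Measure.restrict_univ] using this
    rw [e1, ← e2]
    exact integral_mono (habsZnind_int n) hZindInt.abs (fun ω => hbound_ind n ω)
  have hZW_int : Integrable (fun ω => Z ω * W ω) P := by
    refine ⟨hZW_meas, ?_⟩
    show (∫⁻ ω, ‖Z ω * W ω‖₊ ∂P) < ∞
    have hlim : ∀ ω, (‖Z ω * W ω‖₊ : ℝ≥0∞)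
        = liminf (fun n => (‖Zn n ω * W ω‖₊ : ℝ≥0∞)) atTop := by
      intro ω
      have : Tendsto (fun n => (‖Zn n ω * W ω‖₊ : ℝ≥0∞)) atTop
          (𝓝 (‖Z ω * W ω‖₊ : ℝ≥0∞)) := by
        refine (ENNReal.tendsto_coe.mpr ?_)
        exact ((hZn_tendsto ω).mul_const (W ω)).nnnorm
      exact this.liminf_eq.symm
    calc ∫⁻ ω, ‖Z ω * W ω‖₊ ∂P
        = ∫⁻ ω, liminf (fun n => (‖Zn n ω * W ω‖₊ : ℝ≥0∞)) atTop ∂P :=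
          lintegral_congr fun ω => hlim ω
      _ ≤ liminf (fun n => ∫⁻ ω, ‖Zn n ω * W ω‖₊ ∂P) atTop :=
          lintegral_liminf_le fun n =>
            (((hZnm n).mono hℱ).measurable.mul
              ((hWm.mono hℱ).measurable)).enorm
      _ ≤ ENNReal.ofReal (∫ ω, |A.indicator Z ω| ∂P) := by
          calc liminf (fun n => ∫⁻ ω, ‖Zn n ω * W ω‖₊ ∂P) atTop
              ≤ liminf (fun _ => ENNReal.ofReal (∫ ω, |A.indicator Z ω| ∂P)) atTop :=
                liminf_le_liminf (Eventually.of_forall key_lint)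
            _ = ENNReal.ofReal (∫ ω, |A.indicator Z ω| ∂P) := liminf_const _
      _ < ∞ := ENNReal.ofReal_lt_top
  -- set integral identity for Z * W
  have hsetZW : ∀ s : Set Ω, MeasurableSet[ℱ] s →
      ∫ ω in s, Z ω * W ω ∂P = ∫ ω in s, A.indicator Y ω ∂P := by
    intro s hs
    have hs𝒢 : MeasurableSet s := hℱ s hs
    have t1 : Tendsto (fun n => ∫ ω in s, Zn n ω * W ω ∂P) atTop
        (𝓝 (∫ ω in s, Z ω * W ω ∂P)) := by
      refine tendsto_integral_of_dominated_convergence (fun ω => |Z ω * W ω|)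
        (fun n => ((hZnW_int n).restrict).aestronglyMeasurable)
        (hZW_int.abs.restrict) (fun n => ?_) ?_
      · refine Eventually.of_forall fun ω => ?_
        simp only [Real.norm_eq_abs, abs_mul]
        exact mul_le_mul_of_nonneg_right (hZn_le n ω) (abs_nonneg _)
      · exact Eventually.of_forall fun ω => (hZn_tendsto ω).mul_const (W ω)
    have t2 : Tendsto (fun n => ∫ ω in s, Zn n ω * ind ω ∂P) atTop
        (𝓝 (∫ ω in s, Z ω * ind ω ∂P)) := by
      refine tendsto_integral_of_dominated_convergence (fun ω => |A.indicator Z ω|)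
        (fun n => ((hZnind_int n).restrict).aestronglyMeasurable)
        (hZindInt.abs.restrict) (fun n => ?_) ?_
      · refine Eventually.of_forall fun ω => ?_
        simp only [Real.norm_eq_abs, abs_mul]
        calc |Zn n ω| * |ind ω| = |Zn n ω| * ind ω := by
              rw [abs_of_nonneg (Set.indicator_nonneg (fun _ _ => zero_le_one) ω)]
          _ ≤ |A.indicator Z ω| := hbound_ind n ω
      · exact Eventually.of_forall fun ω => (hZn_tendsto ω).mul_const (ind ω)
    have hfun : (fun n => ∫ ω in s, Zn n ω * ind ω ∂P)
        = fun n => ∫ ω in s, Zn n ω * W ω ∂P :=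
      funext fun n => pull (Zn n) (hZnm n) (hZnind_int n) s hs
    have hZindW : ∫ ω in s, Z ω * ind ω ∂P = ∫ ω in s, Z ω * W ω ∂P :=
      tendsto_nhds_unique (hfun ▸ t2) t1
    have hZind : ∫ ω in s, Z ω * ind ω ∂P = ∫ ω in s, A.indicator Z ω ∂P := by
      refine integral_congr_ae (Eventually.of_forall fun ω => ?_)
      by_cases hω : ω ∈ A
      · simp [hinddef, Set.indicator_of_mem hω]
      · simp [hinddef, Set.indicator_of_notMem hω]
    rw [← hZindW, hZind, measrel Z s hs𝒢, measrel Y s hs𝒢,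
      setIntegral_condExp hℱ hYμ hs]
  -- Z * W is a version of the conditional expectation of the indicator of A times Y
  have hZWcond : (fun ω => Z ω * W ω) =ᵐ[P] f1 :=
    ae_eq_condExp_of_forall_setIntegral_eq hℱ hintAY
      (fun s _ _ => hZW_int.integrableOn)
      (fun s hs _ => hsetZW s hs)
      ((hZm.mul hWm).aestronglyMeasurable)
  -- a.e. on A, W is nonzero
  have hW0 : ∀ᵐ ω ∂P, ω ∈ A → W ω ≠ 0 := by
    set s0 : Set Ω := {ω | W ω = 0} with hs0def
    have hs0ℱ : MeasurableSet[ℱ] s0 := hWm.measurable (measurableSet_singleton 0)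
    have hs0 : MeasurableSet s0 := hℱ _ hs0ℱ
    have h1 : ∫ ω in s0, W ω ∂P = ∫ ω in s0, ind ω ∂P :=
      setIntegral_condExp hℱ hint1A hs0ℱ
    have h2 : ∫ ω in s0, W ω ∂P = 0 := by
      rw [setIntegral_congr_fun hs0 (g := fun _ => (0:ℝ)) (fun ω hω => hω)]
      simp
    have h3 : ∫ ω in s0, ind ω ∂P = (P (s0 ∩ A)).toReal := by
      rw [hinddef, setIntegral_indicator hA]
      simp [measureReal_def]
    have h4 : P (s0 ∩ A) = 0 := by
      have := h1.symm.trans h2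
      rw [h3] at this
      exact (ENNReal.toReal_eq_zero_iff _).mp this |>.resolve_right (measure_ne_top P _)
    have h5 : ∀ᵐ ω ∂P, ω ∉ s0 ∩ A := measure_eq_zero_iff_ae_notMem.mp h4
    filter_upwards [h5] with ω hω hmem hzero
    exact hω ⟨hzero, hmem⟩
  -- conclusion
  filter_upwards [hW0, hZWcond] with ω h0 heq
  by_cases hω : ω ∈ A
  · simp only [hinddef, Set.indicator_of_mem hω, mul_one]
    rw [← heq]
    exact mul_div_cancel_right₀ _ (h0 hω)
  · simp [hinddef, Set.indicator_of_notMem hω]
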